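/- Let d be even, let ν : ℝ → ℝ be additive, let A be an invertible real d×d matrix, and set S(x) := A Q_d^ν(x) A^{-1} for x ≥ 0. Suppose each S(x) is an isometry of ℝ^d (an orthogonal matrix). Then there exists an orthogonal d×d matrix U such that S(x) = U Q_d^ν(x) Uᵀ for all x ≥ 0. -/

import Mathlib

open scoped Matrix

noncomputable section

/-- The 2×2 rotation matrix `Q(θ)`. -/
def rotMat (θ : ℝ) : Matrix (Fin 2) (Fin 2) ℝ :=
  !![Real.cos θ, Real.sin θ; -Real.sin θ, Real.cos θ]

/-- The block-diagonal matrix `Q_d^ν(x)` consisting of `m = d/2` rotation blocks `Q(ν x)`,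
indexed by `Fin 2 × Fin m` (so `d = 2 * m`). -/
def Qnu (m : ℕ) (ν : ℝ → ℝ) (x : ℝ) : Matrix (Fin 2 × Fin m) (Fin 2 × Fin m) ℝ :=
  Matrix.blockDiagonal fun _ : Fin m => rotMat (ν x)

lemma rotMat_orth (θ : ℝ) : (rotMat θ)ᵀ * rotMat θ = 1 := by
  have h : (rotMat θ)ᵀ = !![Real.cos θ, -Real.sin θ; Real.sin θ, Real.cos θ] := by
    ext i j; fin_cases i <;> fin_cases j <;> rfl
  rw [h, rotMat]
  ext i j
  fin_cases i <;> fin_cases j <;>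
    simp [Matrix.mul_apply, Fin.sum_univ_two, Matrix.one_apply] <;>
    nlinarith [Real.sin_sq_add_cos_sq θ]

lemma Qnu_orth (m : ℕ) (ν : ℝ → ℝ) (x : ℝ) : (Qnu m ν x)ᵀ * Qnu m ν x = 1 := by
  have h : (fun _ : Fin m => (rotMat (ν x))ᵀ * rotMat (ν x))
      = (1 : Fin m → Matrix (Fin 2) (Fin 2) ℝ) :=
    funext fun _ => by simpa using rotMat_orth (ν x)
  calc (Qnu m ν x)ᵀ * Qnu m ν x
      = Matrix.blockDiagonal (fun _ : Fin m => (rotMat (ν x))ᵀ * rotMat (ν x)) := by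
        rw [Qnu, Matrix.blockDiagonal_transpose, Matrix.blockDiagonal_mul]
    _ = 1 := by rw [h, Matrix.blockDiagonal_one]

/-- If `S x = A * Q_d^ν(x) * A⁻¹` is orthogonal for every `x ≥ 0`, where
`A` is invertible and `ν` is additive, then `S x = U * Q_d^ν(x) * Uᵀ` for some orthogonal
matrix `U`. -/
theorem conjugated_rotation_orthogonal
    (m : ℕ) (ν : ℝ → ℝ)
    (hν : ∀ x y : ℝ, ν x + ν y = ν (x + y))
    (A : Matrix (Fin 2 × Fin m) (Fin 2 × Fin m) ℝ)
    (hA : IsUnit A)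
    (S : ℝ → Matrix (Fin 2 × Fin m) (Fin 2 × Fin m) ℝ)
    (hS : ∀ x : ℝ, 0 ≤ x → S x = A * Qnu m ν x * A⁻¹)
    (hSorth : ∀ x : ℝ, 0 ≤ x → (S x)ᵀ * S x = 1) :
    ∃ U : Matrix (Fin 2 × Fin m) (Fin 2 × Fin m) ℝ,
      Uᵀ * U = 1 ∧ ∀ x : ℝ, 0 ≤ x → S x = U * Qnu m ν x * Uᵀ := by
  classical
  have hAdet : IsUnit A.det := (Matrix.isUnit_iff_isUnit_det A).mp hA
  have hAinv : A⁻¹ * A = 1 := Matrix.nonsing_inv_mul A hAdet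
  have hAinv' : A * A⁻¹ = 1 := Matrix.mul_nonsing_inv A hAdet
  set P : Matrix (Fin 2 × Fin m) (Fin 2 × Fin m) ℝ := Aᵀ * A with hPdef
  have hPsd : P.PosSemidef := by
    simpa using Matrix.posSemidef_conjTranspose_mul_self A
  open scoped MatrixOrder in
  set R := CFC.sqrt P with hRdef
  open scoped MatrixOrder in
  have hRR : R * R = P := CFC.sqrt_mul_sqrt_self P hPsd.nonneg
  open scoped MatrixOrder in
  have hRsd : R.PosSemidef := Matrix.nonneg_iff_posSemidef.mp (CFC.sqrt_nonneg P)
  have hRsymm : Rᵀ = R := by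
    have := hRsd.1
    simpa [Matrix.IsHermitian] using this
  have hRdet : IsUnit R.det := by
    have hPu : IsUnit P.det := by
      rw [hPdef, Matrix.det_mul, Matrix.det_transpose]
      exact hAdet.mul hAdet
    rw [← hRR, Matrix.det_mul] at hPu
    exact isUnit_of_mul_isUnit_left hPu
  have hRinv : R⁻¹ * R = 1 := Matrix.nonsing_inv_mul R hRdet
  have hRinv' : R * R⁻¹ = 1 := Matrix.mul_nonsing_inv R hRdet
  refine ⟨A * R⁻¹, ?_, ?_⟩
  · have h1 : (A * R⁻¹)ᵀ * (A * R⁻¹) = R⁻¹ * (Aᵀ * A) * R⁻¹ := by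
      rw [Matrix.transpose_mul, Matrix.transpose_nonsing_inv, hRsymm]
      noncomm_ring
    rw [h1, ← hPdef, ← hRR]
    calc R⁻¹ * (R * R) * R⁻¹ = (R⁻¹ * R) * (R * R⁻¹) := by noncomm_ring
    _ = 1 := by rw [hRinv, hRinv', one_mul]
  · intro x hx
    set Q := Qnu m ν x with hQ
    have hQo : Qᵀ * Q = 1 := Qnu_orth m ν x
    have hQo' : Q * Qᵀ = 1 := mul_eq_one_comm.mp hQo
    -- Qᵀ P Q = P
    have key : Qᵀ * P * Q = P := by
      have h1 := hSorth x hx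
      rw [hS x hx] at h1
      have h2 : A⁻¹ᵀ * (Qᵀ * (Aᵀ * A) * Q) * A⁻¹ = 1 := by
        rw [← h1]
        simp only [Matrix.transpose_mul, Matrix.transpose_nonsing_inv]
        noncomm_ring
      have h3 : Aᵀ * (A⁻¹ᵀ * (Qᵀ * (Aᵀ * A) * Q) * A⁻¹) * A = Aᵀ * 1 * A := by rw [h2]
      have hAt : Aᵀ * A⁻¹ᵀ = 1 := by
        rw [← Matrix.transpose_mul, hAinv, Matrix.transpose_one]
      calc Qᵀ * P * Q = (Aᵀ * A⁻¹ᵀ) * (Qᵀ * (Aᵀ * A) * Q) * (A⁻¹ * A) := by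
            rw [hAt, hAinv]; rw [hPdef]; noncomm_ring
        _ = Aᵀ * (A⁻¹ᵀ * (Qᵀ * (Aᵀ * A) * Q) * A⁻¹) * A := by noncomm_ring
        _ = Aᵀ * 1 * A := h3
        _ = P := by rw [hPdef]; noncomm_ring
    -- Qᵀ R Q = R
    have keyR : Qᵀ * R * Q = R := by
      have hpsd : (Qᵀ * R * Q).PosSemidef := by
        have := hRsd.mul_mul_conjTranspose_same Qᵀ
        simpa using this
      have hsq : (Qᵀ * R * Q) ^ 2 = P := by
        rw [pow_two]
        calc Qᵀ * R * Q * (Qᵀ * R * Q) = Qᵀ * R * (Q * Qᵀ) * R * Q := by noncomm_ring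
          _ = Qᵀ * (R * R) * Q := by rw [hQo']; noncomm_ring
          _ = P := by rw [hRR]; exact key
      open scoped MatrixOrder in
      have : Qᵀ * R * Q = R := (CFC.sqrt_unique (by rw [← pow_two]; exact hsq) hpsd.nonneg).symm
      rw [this]
    have hcomm : R * Q = Q * R := by
      calc R * Q = Q * (Qᵀ * R * Q) := by rw [← Matrix.mul_assoc, ← Matrix.mul_assoc, hQo', Matrix.one_mul]
        _ = Q * R := by rw [keyR]
    -- finish
    have hAeq : A = (A * R⁻¹) * R := by rw [Matrix.mul_assoc, hRinv, Matrix.mul_one]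
    have hAinvEq : A⁻¹ = R⁻¹ * (A * R⁻¹)ᵀ := by
      have hUo : (A * R⁻¹)ᵀ * (A * R⁻¹) = 1 := by
        rw [Matrix.transpose_mul, Matrix.transpose_nonsing_inv, hRsymm]
        calc R⁻¹ * Aᵀ * (A * R⁻¹) = R⁻¹ * (Aᵀ * A) * R⁻¹ := by noncomm_ring
          _ = R⁻¹ * (R * R) * R⁻¹ := by rw [← hPdef, ← hRR]
          _ = (R⁻¹ * R) * (R * R⁻¹) := by noncomm_ring
          _ = 1 := by rw [hRinv, hRinv', one_mul]
      have hUo' : (A * R⁻¹) * (A * R⁻¹)ᵀ = 1 := mul_eq_one_comm.mp hUo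
      have : A⁻¹ = A⁻¹ * ((A * R⁻¹) * (A * R⁻¹)ᵀ) := by rw [hUo', Matrix.mul_one]
      rw [this]
      calc A⁻¹ * (A * R⁻¹ * (A * R⁻¹)ᵀ) = (A⁻¹ * A) * (R⁻¹ * (A * R⁻¹)ᵀ) := by noncomm_ring
        _ = R⁻¹ * (A * R⁻¹)ᵀ := by rw [hAinv, Matrix.one_mul]
    rw [hS x hx, hAinvEq]
    calc A * Q * (R⁻¹ * (A * R⁻¹)ᵀ)
        = (A * R⁻¹ * R) * Q * (R⁻¹ * (A * R⁻¹)ᵀ) := by rw [← hAeq]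
      _ = (A * R⁻¹) * ((R * Q) * R⁻¹) * (A * R⁻¹)ᵀ := by noncomm_ring
      _ = (A * R⁻¹) * ((Q * R) * R⁻¹) * (A * R⁻¹)ᵀ := by rw [hcomm]
      _ = (A * R⁻¹) * (Q * (R * R⁻¹)) * (A * R⁻¹)ᵀ := by noncomm_ring
      _ = (A * R⁻¹) * Q * (A * R⁻¹)ᵀ := by rw [hRinv', Matrix.mul_one]
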